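/- For every continuously differentiable function z : [0,1] → ℝ with z(0) = 0 one has sup_{x∈[0,1]} |z(x)| ≤ 2 (∫₀¹ z'(x)² dx)^{1/4} (∫₀¹ z(x)² dx)^{1/4}. -/

import Mathlib

open Set MeasureTheory

/-- Gagliardo–Nirenberg interpolation inequality on the unit interval
(Lemma 3.1, second part): case z(0) = 0. -/
theorem gagliardo_nirenberg_unit_interval_zero (z : ℝ → ℝ) (hz : ContDiff ℝ 1 z)
    (hz0 : z 0 = 0) :
    ∀ x ∈ Icc (0:ℝ) 1,
      |z x| ≤ 2 * ((∫ y in (0:ℝ)..1, (deriv z y)^2) ^ ((1:ℝ)/4) *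
        (∫ y in (0:ℝ)..1, (z y)^2) ^ ((1:ℝ)/4)) := by
  intro x hx
  obtain ⟨hx0, hx1⟩ := hx
  have hzc : Continuous z := hz.continuous
  have hz'c : Continuous (deriv z) := (hz.iterate_deriv' 0 1).continuous
  set A : ℝ := ∫ y in (0:ℝ)..1, (deriv z y)^2 with hA
  set B : ℝ := ∫ y in (0:ℝ)..1, (z y)^2 with hB
  have hAnn : 0 ≤ A := intervalIntegral.integral_nonneg zero_le_one (fun y _ => sq_nonneg _)
  have hBnn : 0 ≤ B := intervalIntegral.integral_nonneg zero_le_one (fun y _ => sq_nonneg _)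
  -- Step 1: FTC
  have hderiv : ∀ y ∈ Set.uIcc (0:ℝ) x, HasDerivAt (fun t => z t ^ 2)
      (2 * (z y * deriv z y)) y := by
    intro y _
    have h1 : HasDerivAt z (deriv z y) y :=
      (hz.differentiable one_ne_zero y).hasDerivAt
    have := h1.fun_pow 2
    simpa [mul_comm, mul_assoc, mul_left_comm] using this
  have hintg : IntervalIntegrable (fun y => 2 * (z y * deriv z y)) volume 0 x :=
    (continuous_const.mul (hzc.mul hz'c)).intervalIntegrable 0 x
  have hftc : z x ^ 2 = ∫ y in (0:ℝ)..x, 2 * (z y * deriv z y) := by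
    have := intervalIntegral.integral_eq_sub_of_hasDerivAt hderiv hintg
    rw [this, hz0]; ring
  -- Step 2: bound by integral of absolute values over [0,1]
  have h2 : z x ^ 2 ≤ ∫ y in (0:ℝ)..1, 2 * (|z y| * |deriv z y|) := by
    rw [hftc]
    calc ∫ y in (0:ℝ)..x, 2 * (z y * deriv z y)
        ≤ ∫ y in (0:ℝ)..x, 2 * (|z y| * |deriv z y|) := by
          apply intervalIntegral.integral_mono_on hx0
            (by exact hintg.mono_set (by simp [uIcc_of_le, hx0, hx1]))
            ((continuous_const.mul (hzc.abs.mul hz'c.abs)).intervalIntegrable 0 x)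
          intro y _
          have : z y * deriv z y ≤ |z y| * |deriv z y| := by
            rw [← abs_mul]; exact le_abs_self _
          show 2 * (z y * deriv z y) ≤ 2 * (|z y| * |deriv z y|); linarith
      _ ≤ ∫ y in (0:ℝ)..1, 2 * (|z y| * |deriv z y|) := by
          apply intervalIntegral.integral_mono_interval le_rfl hx0 hx1
          · filter_upwards with y
            positivity
          · exact (continuous_const.mul (hzc.abs.mul hz'c.abs)).intervalIntegrable 0 1
  -- Step 3: Cauchy–Schwarz
  have hconj : Real.HolderConjugate 2 2 := Real.HolderConjugate.two_two
  have hmem : ∀ f : ℝ → ℝ, Continuous f →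
      MemLp (fun y => |f y|) (ENNReal.ofReal 2) (volume.restrict (Set.Ioc (0:ℝ) 1)) := by
    intro f hf
    obtain ⟨C, hC⟩ := (isCompact_Icc (a := (0:ℝ)) (b := 1)).exists_bound_of_continuousOn
      hf.continuousOn
    apply memLp_of_bounded (a := -C) (b := C)
    · rw [ae_restrict_iff' measurableSet_Ioc]
      filter_upwards with y hy
      have := hC y (Ioc_subset_Icc_self hy)
      rw [Real.norm_eq_abs] at this
      constructor
      · linarith [abs_nonneg (f y)]
      · simpa using this
    · exact hf.abs.aestronglyMeasurable
  have hCS : (∫ y in Set.Ioc (0:ℝ) 1, |z y| * |deriv z y|) ≤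
      B ^ ((1:ℝ)/2) * A ^ ((1:ℝ)/2) := by
    have := MeasureTheory.integral_mul_le_Lp_mul_Lq_of_nonneg (μ := volume.restrict (Set.Ioc (0:ℝ) 1))
      hconj (f := fun y => |z y|) (g := fun y => |deriv z y|)
      (Filter.Eventually.of_forall fun y => abs_nonneg _)
      (Filter.Eventually.of_forall fun y => abs_nonneg _)
      (hmem z hzc) (hmem (deriv z) hz'c)
    have hBeq : (∫ y in Set.Ioc (0:ℝ) 1, |z y| ^ (2:ℝ)) = B := by
      rw [hB, intervalIntegral.integral_of_le zero_le_one]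
      apply setIntegral_congr_fun measurableSet_Ioc
      intro y _
      simp only [Real.rpow_two, sq_abs]
    have hAeq : (∫ y in Set.Ioc (0:ℝ) 1, |deriv z y| ^ (2:ℝ)) = A := by
      rw [hA, intervalIntegral.integral_of_le zero_le_one]
      apply setIntegral_congr_fun measurableSet_Ioc
      intro y _
      simp only [Real.rpow_two, sq_abs]
    calc (∫ y in Set.Ioc (0:ℝ) 1, |z y| * |deriv z y|)
        ≤ (∫ y in Set.Ioc (0:ℝ) 1, |z y| ^ (2:ℝ)) ^ ((1:ℝ)/2) *
          (∫ y in Set.Ioc (0:ℝ) 1, |deriv z y| ^ (2:ℝ)) ^ ((1:ℝ)/2) := this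
      _ = B ^ ((1:ℝ)/2) * A ^ ((1:ℝ)/2) := by rw [hBeq, hAeq]
  -- combine steps 2 and 3
  have h3 : z x ^ 2 ≤ 2 * (B ^ ((1:ℝ)/2) * A ^ ((1:ℝ)/2)) := by
    calc z x ^ 2 ≤ ∫ y in (0:ℝ)..1, 2 * (|z y| * |deriv z y|) := h2
      _ = 2 * ∫ y in Set.Ioc (0:ℝ) 1, |z y| * |deriv z y| := by
          rw [intervalIntegral.integral_of_le zero_le_one, integral_const_mul]
      _ ≤ 2 * (B ^ ((1:ℝ)/2) * A ^ ((1:ℝ)/2)) := by linarith [hCS]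
  -- Step 4: conclude
  set b : ℝ := 2 * (A ^ ((1:ℝ)/4) * B ^ ((1:ℝ)/4)) with hb
  have hbnn : 0 ≤ b := by positivity
  have hbsq : z x ^ 2 ≤ b ^ 2 := by
    have hb2 : b ^ 2 = 4 * (B ^ ((1:ℝ)/2) * A ^ ((1:ℝ)/2)) := by
      rw [hb]
      have hA2 : (A ^ ((1:ℝ)/4)) ^ (2:ℕ) = A ^ ((1:ℝ)/2) := by
        rw [← Real.rpow_natCast (A ^ ((1:ℝ)/4)) 2, ← Real.rpow_mul hAnn]
        norm_num
      have hB2 : (B ^ ((1:ℝ)/4)) ^ (2:ℕ) = B ^ ((1:ℝ)/2) := by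
        rw [← Real.rpow_natCast (B ^ ((1:ℝ)/4)) 2, ← Real.rpow_mul hBnn]
        norm_num
      calc (2 * (A ^ ((1:ℝ)/4) * B ^ ((1:ℝ)/4))) ^ 2
          = 4 * ((A ^ ((1:ℝ)/4)) ^ (2:ℕ) * (B ^ ((1:ℝ)/4)) ^ (2:ℕ)) := by ring
        _ = 4 * (B ^ ((1:ℝ)/2) * A ^ ((1:ℝ)/2)) := by rw [hA2, hB2]; ring
    rw [hb2]
    nlinarith [h3, Real.rpow_nonneg hAnn ((1:ℝ)/2), Real.rpow_nonneg hBnn ((1:ℝ)/2)]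
  calc |z x| = Real.sqrt (z x ^ 2) := (Real.sqrt_sq_eq_abs _).symm
    _ ≤ Real.sqrt (b ^ 2) := Real.sqrt_le_sqrt hbsq
    _ = b := by rw [Real.sqrt_sq hbnn]
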